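/- arXiv:2308.08958 — 7 statements merged into one kernel-verified Lean document; each statement's English description precedes it below -/
import Mathlib

section
/- Let X be a T×K real matrix of full column rank, Γ a T×T matrix with ‖Γ‖ < 1, P = X(XᵀX)⁻¹Xᵀ, M = I−P, A_Γ = (I−Γ)⁻¹Γ, and M_Γ = I − X(Xᵀ(I−Γ)X)⁻¹Xᵀ(I−Γ). Then (I−Γ)M_Γ = M(I + A_Γ M)⁻¹. -/
open Matrix

private lemma aux_dot_zero {T : ℕ} (Γ : Matrix (Fin T) (Fin T) ℝ)
    (hΓ : ‖toEuclideanCLM (𝕜 := ℝ) Γ‖ < 1)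
    (u : Fin T → ℝ) (h : u ⬝ᵥ ((1 - Γ) *ᵥ u) = 0) : u = 0 := by
  set e : EuclideanSpace ℝ (Fin T) := (WithLp.equiv 2 _).symm u with he
  have hTe : toEuclideanCLM (𝕜 := ℝ) Γ e = (WithLp.equiv 2 _).symm (Γ *ᵥ u) := by
    rw [he]; exact toEuclideanCLM_toLp Γ u
  have hinner : inner ℝ e (toEuclideanCLM (𝕜 := ℝ) Γ e) = u ⬝ᵥ (Γ *ᵥ u) := by
    rw [hTe, PiLp.inner_apply]
    simp [dotProduct, RCLike.inner_apply, PiLp.toLp_apply, he, mul_comm]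
  have hself : (inner ℝ e e : ℝ) = u ⬝ᵥ u := by
    rw [PiLp.inner_apply]
    simp [dotProduct, RCLike.inner_apply, he, PiLp.toLp_apply, sq]
  have huu : u ⬝ᵥ u = u ⬝ᵥ (Γ *ᵥ u) := by
    have h2 : u ⬝ᵥ ((1 - Γ) *ᵥ u) = u ⬝ᵥ u - u ⬝ᵥ (Γ *ᵥ u) := by
      rw [sub_mulVec, dotProduct_sub, one_mulVec]
    rw [h2] at h
    linarith
  by_contra hu
  have hne : ‖e‖ ≠ 0 := by
    simp only [norm_ne_zero_iff, he]
    exact fun h0 => hu (by simpa using congrArg (WithLp.equiv 2 _) h0)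
  have hb : (inner ℝ e e : ℝ) ≤ ‖toEuclideanCLM (𝕜 := ℝ) Γ‖ * (‖e‖ * ‖e‖) := by
    rw [hself, huu, ← hinner]
    calc (inner ℝ e (toEuclideanCLM (𝕜 := ℝ) Γ e) : ℝ) ≤ ‖e‖ * ‖toEuclideanCLM (𝕜 := ℝ) Γ e‖ :=
          real_inner_le_norm _ _
      _ ≤ ‖e‖ * (‖toEuclideanCLM (𝕜 := ℝ) Γ‖ * ‖e‖) := by
          gcongr; exact (toEuclideanCLM (𝕜 := ℝ) Γ).le_opNorm e
      _ = ‖toEuclideanCLM (𝕜 := ℝ) Γ‖ * (‖e‖ * ‖e‖) := by ring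
  rw [real_inner_self_eq_norm_mul_norm] at hb
  have hpos : 0 < ‖e‖ := lt_of_le_of_ne (norm_nonneg e) (Ne.symm hne)
  nlinarith [mul_pos hpos hpos]

private lemma aux_isUnit_of_ker {K : ℕ} (A : Matrix (Fin K) (Fin K) ℝ)
    (h : ∀ v, A *ᵥ v = 0 → v = 0) : IsUnit A := by
  rw [← Matrix.mulVec_injective_iff_isUnit]
  intro v w hvw
  have := h (v - w) (by rw [Matrix.mulVec_sub, hvw, sub_self])
  exact sub_eq_zero.mp this

private lemma aux_main {T K : ℕ} (X : Matrix (Fin T) (Fin K) ℝ)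
    (Xt : Matrix (Fin K) (Fin T) ℝ)
    (S s : Matrix (Fin T) (Fin T) ℝ) (g b : Matrix (Fin K) (Fin K) ℝ)
    (r1 : ∀ (n : Type) (Z : Matrix (Fin K) n ℝ), g * (Xt * (X * Z)) = Z)
    (r1' : g * (Xt * X) = 1)
    (r2 : ∀ (n : Type) (Z : Matrix (Fin K) n ℝ), Xt * (X * (g * Z)) = Z)
    (r2' : Xt * (X * g) = 1)
    (r3 : ∀ (n : Type) (Z : Matrix (Fin K) n ℝ), b * (Xt * (S * (X * Z))) = Z)
    (r3' : b * (Xt * (S * X)) = 1)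
    (r4 : ∀ (n : Type) (Z : Matrix (Fin K) n ℝ), Xt * (S * (X * (b * Z))) = Z)
    (r4' : Xt * (S * (X * b)) = 1)
    (r5 : ∀ (Z : Matrix (Fin T) (Fin T) ℝ), s * (S * Z) = Z) (r5' : s * S = 1)
    (r6 : ∀ (Z : Matrix (Fin T) (Fin T) ℝ), S * (s * Z) = Z) (r6' : S * s = 1) :
    S * (1 - X * b * (Xt * S)) =
      (1 - X * g * Xt) * (1 + s * (1 - S) * (1 - X * g * Xt))⁻¹ := by
  have hUC : (1 + s * (1 - S) * (1 - X * g * Xt)) * ((1 + (1 - S) * (X * (b * Xt))) * S)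
      = 1 := by
    simp only [Matrix.mul_add, Matrix.add_mul, Matrix.mul_sub, Matrix.sub_mul,
      Matrix.mul_one, Matrix.one_mul, Matrix.mul_assoc, r1, r1', r2, r2', r3, r3', r4, r4',
      r5, r5', r6, r6']
    abel
  rw [Matrix.inv_eq_right_inv hUC]
  simp only [Matrix.mul_add, Matrix.add_mul, Matrix.mul_sub, Matrix.sub_mul,
    Matrix.mul_one, Matrix.one_mul, Matrix.mul_assoc, r1, r1', r2, r2', r3, r3', r4, r4',
    r5, r5', r6, r6']
  abel

/-- With `P = X(XᵀX)⁻¹Xᵀ`, `M = I−P`, `A_Γ = (I−Γ)⁻¹Γ`, and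
`M_Γ = I − X(Xᵀ(I−Γ)X)⁻¹Xᵀ(I−Γ)`, one has `(I−Γ)M_Γ = M(I + A_Γ M)⁻¹`. -/
theorem oblique_residual_identity {T K : ℕ}
    (X : Matrix (Fin T) (Fin K) ℝ) (Γ : Matrix (Fin T) (Fin T) ℝ)
    (hX : X.rank = K) (hΓ : ‖toEuclideanCLM (𝕜 := ℝ) Γ‖ < 1)
    (P M AΓ MΓ : Matrix (Fin T) (Fin T) ℝ)
    (hP : P = X * (Xᵀ * X)⁻¹ * Xᵀ) (hM : M = 1 - P)
    (hA : AΓ = (1 - Γ)⁻¹ * Γ)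
    (hMΓ : MΓ = 1 - X * (Xᵀ * (1 - Γ) * X)⁻¹ * (Xᵀ * (1 - Γ))) :
    (1 - Γ) * MΓ = M * (1 + AΓ * M)⁻¹ := by
  -- X has trivial kernel
  have hXinj : ∀ v, X *ᵥ v = 0 → v = 0 := by
    have h1 : LinearMap.ker X.mulVecLin = ⊥ := by
      rw [← Submodule.finrank_eq_zero (R := ℝ)]
      have h2 := LinearMap.finrank_range_add_finrank_ker X.mulVecLin
      rw [show Module.finrank ℝ (LinearMap.range X.mulVecLin) = K from hX] at h2
      simpa using h2
    intro v hv
    exact (LinearMap.ker_eq_bot.mp h1) (by simpa using hv)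
  -- Xᵀ X is a unit
  have hGunit : IsUnit (Xᵀ * X) := by
    refine aux_isUnit_of_ker _ (fun v hv => hXinj v ?_)
    have h0 : v ⬝ᵥ ((Xᵀ * X) *ᵥ v) = 0 := by rw [hv, dotProduct_zero]
    rwa [← Matrix.mulVec_mulVec, Matrix.dotProduct_mulVec, Matrix.vecMul_transpose,
      dotProduct_self_eq_zero] at h0
  -- Xᵀ (1-Γ) X is a unit
  have hBunit : IsUnit (Xᵀ * (1 - Γ) * X) := by
    refine aux_isUnit_of_ker _ (fun v hv => hXinj v (aux_dot_zero Γ hΓ _ ?_))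
    have h0 : v ⬝ᵥ ((Xᵀ * (1 - Γ) * X) *ᵥ v) = 0 := by rw [hv, dotProduct_zero]
    rwa [← Matrix.mulVec_mulVec, ← Matrix.mulVec_mulVec, Matrix.dotProduct_mulVec,
      Matrix.vecMul_transpose] at h0
  -- 1 - Γ is a unit
  have hSunit : IsUnit (1 - Γ) := by
    have h1 : IsUnit (toEuclideanCLM (𝕜 := ℝ) (1 - Γ)) := by
      rw [map_sub, _root_.map_one]
      exact isUnit_one_sub_of_norm_lt_one hΓ
    simpa using h1.map (toEuclideanCLM (𝕜 := ℝ)).symm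
  have hGdet := (Matrix.isUnit_iff_isUnit_det _).mp hGunit
  have hBdet := (Matrix.isUnit_iff_isUnit_det _).mp hBunit
  have hSdet := (Matrix.isUnit_iff_isUnit_det _).mp hSunit
  -- cancellation lemmas
  have r1 : ∀ (n : Type) (Z : Matrix (Fin K) n ℝ),
      (Xᵀ * X)⁻¹ * (Xᵀ * (X * Z)) = Z := by
    intro n Z
    rw [← Matrix.mul_assoc Xᵀ X Z, ← Matrix.mul_assoc, Matrix.nonsing_inv_mul _ hGdet,
      Matrix.one_mul]
  have r1' : (Xᵀ * X)⁻¹ * (Xᵀ * X) = 1 := Matrix.nonsing_inv_mul _ hGdet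
  have r2 : ∀ (n : Type) (Z : Matrix (Fin K) n ℝ),
      Xᵀ * (X * ((Xᵀ * X)⁻¹ * Z)) = Z := by
    intro n Z
    rw [← Matrix.mul_assoc X _ Z, ← Matrix.mul_assoc, ← Matrix.mul_assoc,
      Matrix.mul_nonsing_inv _ hGdet, Matrix.one_mul]
  have r2' : Xᵀ * (X * (Xᵀ * X)⁻¹) = 1 := by
    rw [← Matrix.mul_assoc, Matrix.mul_nonsing_inv _ hGdet]
  have r3 : ∀ (n : Type) (Z : Matrix (Fin K) n ℝ),
      (Xᵀ * (1 - Γ) * X)⁻¹ * (Xᵀ * ((1 - Γ) * (X * Z))) = Z := by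
    intro n Z
    have h := congrArg (fun W => W * Z) (Matrix.nonsing_inv_mul _ hBdet)
    simpa only [Matrix.mul_assoc, Matrix.one_mul] using h
  have r3' : (Xᵀ * (1 - Γ) * X)⁻¹ * (Xᵀ * ((1 - Γ) * X)) = 1 := by
    have h := Matrix.nonsing_inv_mul _ hBdet
    simpa only [Matrix.mul_assoc] using h
  have r4 : ∀ (n : Type) (Z : Matrix (Fin K) n ℝ),
      Xᵀ * ((1 - Γ) * (X * ((Xᵀ * (1 - Γ) * X)⁻¹ * Z))) = Z := by
    intro n Z
    have h := congrArg (fun W => W * Z) (Matrix.mul_nonsing_inv _ hBdet)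
    simpa only [Matrix.mul_assoc, Matrix.one_mul] using h
  have r4' : Xᵀ * ((1 - Γ) * (X * (Xᵀ * (1 - Γ) * X)⁻¹)) = 1 := by
    have h := Matrix.mul_nonsing_inv _ hBdet
    simpa only [Matrix.mul_assoc] using h
  have r5 : ∀ (Z : Matrix (Fin T) (Fin T) ℝ), (1 - Γ)⁻¹ * ((1 - Γ) * Z) = Z := by
    intro Z
    rw [← Matrix.mul_assoc, Matrix.nonsing_inv_mul _ hSdet, Matrix.one_mul]
  have r5' : (1 - Γ)⁻¹ * (1 - Γ) = 1 := Matrix.nonsing_inv_mul _ hSdet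
  have r6 : ∀ (Z : Matrix (Fin T) (Fin T) ℝ), (1 - Γ) * ((1 - Γ)⁻¹ * Z) = Z := by
    intro Z
    rw [← Matrix.mul_assoc, Matrix.mul_nonsing_inv _ hSdet, Matrix.one_mul]
  have r6' : (1 - Γ) * (1 - Γ)⁻¹ = 1 := Matrix.mul_nonsing_inv _ hSdet
  subst hP hM hA hMΓ
  rw [show ((1 - Γ)⁻¹ * Γ : Matrix (Fin T) (Fin T) ℝ)
      = (1 - Γ)⁻¹ * (1 - (1 - Γ)) from by rw [sub_sub_cancel]]
  exact aux_main X Xᵀ (1 - Γ) (1 - Γ)⁻¹ (Xᵀ * X)⁻¹ (Xᵀ * (1 - Γ) * X)⁻¹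
    r1 r1' r2 r2' r3 r3' r4 r4' r5 r5' r6 r6'
end

section
/- Let X be a T×K real matrix of full column rank and Γ a T×T matrix with ‖Γ‖ < 1. With P = X(XᵀX)⁻¹Xᵀ, M = I−P, P_Γ = X(Xᵀ(I−Γ)X)⁻¹Xᵀ(I−Γ), and M_Γ = I − P_Γ, the identities P_Γ = (I−PΓ)⁻¹P(I−Γ) and M_Γ = (I−PΓ)⁻¹M hold. -/
open Matrix

private lemma dotProduct_gamma_le {T : ℕ} (Γ : Matrix (Fin T) (Fin T) ℝ) (u : Fin T → ℝ) :
    u ⬝ᵥ (Γ *ᵥ u) ≤ ‖toEuclideanCLM (𝕜 := ℝ) Γ‖ * (u ⬝ᵥ u) := by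
  set x : EuclideanSpace ℝ (Fin T) := (WithLp.equiv 2 _).symm u with hx
  have h1 : toEuclideanCLM (𝕜 := ℝ) Γ x = (WithLp.equiv 2 _).symm (Γ *ᵥ u) :=
    toEuclideanCLM_toLp Γ u
  have h2 : u ⬝ᵥ (Γ *ᵥ u) = inner ℝ x (toEuclideanCLM (𝕜 := ℝ) Γ x) := by
    rw [h1]
    simp [PiLp.inner_apply, dotProduct, RCLike.inner_apply, hx, WithLp.equiv_symm_apply, PiLp.toLp_apply]
    exact Finset.sum_congr rfl fun i _ => mul_comm _ _
  have h3 : (u ⬝ᵥ u : ℝ) = ‖x‖ ^ 2 := by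
    rw [← real_inner_self_eq_norm_sq]
    rw [hx, WithLp.equiv_symm_apply, PiLp.inner_apply]
    simp only [PiLp.toLp_apply, dotProduct, RCLike.inner_apply, conj_trivial]
  rw [h2, h3]
  calc inner ℝ x (toEuclideanCLM (𝕜 := ℝ) Γ x) ≤ ‖x‖ * ‖toEuclideanCLM (𝕜 := ℝ) Γ x‖ :=
        real_inner_le_norm _ _
    _ ≤ ‖x‖ * (‖toEuclideanCLM (𝕜 := ℝ) Γ‖ * ‖x‖) := by
        gcongr; exact (toEuclideanCLM (𝕜 := ℝ) Γ).le_opNorm x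
    _ = ‖toEuclideanCLM (𝕜 := ℝ) Γ‖ * ‖x‖ ^ 2 := by ring

/-- With `P = X(XᵀX)⁻¹Xᵀ`, `M = I−P`, `P_Γ = X(Xᵀ(I−Γ)X)⁻¹Xᵀ(I−Γ)` and `M_Γ = I − P_Γ`,
the identities `P_Γ = (I−PΓ)⁻¹P(I−Γ)` and `M_Γ = (I−PΓ)⁻¹M` hold. -/
theorem oblique_projection_identities {T K : ℕ}
    (X : Matrix (Fin T) (Fin K) ℝ) (Γ : Matrix (Fin T) (Fin T) ℝ)
    (hX : X.rank = K) (hΓ : ‖toEuclideanCLM (𝕜 := ℝ) Γ‖ < 1)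
    (P M PΓ MΓ : Matrix (Fin T) (Fin T) ℝ)
    (hP : P = X * (Xᵀ * X)⁻¹ * Xᵀ) (hM : M = 1 - P)
    (hPΓ : PΓ = X * (Xᵀ * (1 - Γ) * X)⁻¹ * (Xᵀ * (1 - Γ)))
    (hMΓ : MΓ = 1 - PΓ) :
    PΓ = (1 - P * Γ)⁻¹ * P * (1 - Γ) ∧ MΓ = (1 - P * Γ)⁻¹ * M := by
  -- X has trivial kernel
  have hXlin : Function.Injective X.mulVecLin := by
    rw [← LinearMap.ker_eq_bot]
    have h := LinearMap.finrank_range_add_finrank_ker X.mulVecLin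
    rw [Matrix.rank] at hX
    rw [hX] at h
    have hK : Module.finrank ℝ (Fin K → ℝ) = K := by simp
    rw [hK] at h
    have h0 : Module.finrank ℝ (LinearMap.ker X.mulVecLin) = 0 := by omega
    exact Submodule.finrank_eq_zero.mp h0
  have hXinj : ∀ v : Fin K → ℝ, X *ᵥ v = 0 → v = 0 := by
    intro v hv
    have : X.mulVecLin v = X.mulVecLin 0 := by
      simpa [Matrix.mulVecLin_apply] using hv
    exact hXlin this
  -- XᵀX is invertible
  have hGu : IsUnit (Xᵀ * X) := by
    rw [← Matrix.mulVec_injective_iff_isUnit]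
    intro v w h
    have hker : LinearMap.ker (Xᵀ * X).mulVecLin = ⊥ := by
      rw [Matrix.ker_mulVecLin_transpose_mul_self]
      exact LinearMap.ker_eq_bot.mpr hXlin
    have hinj : Function.Injective (Xᵀ * X).mulVecLin := LinearMap.ker_eq_bot.mp hker
    exact hinj h
  -- Xᵀ(1-Γ)X kills only zero
  have hBker : ∀ v : Fin K → ℝ, (Xᵀ * (1 - Γ) * X) *ᵥ v = 0 → v = 0 := by
    intro v hv
    set u : Fin T → ℝ := X *ᵥ v with hu
    have hd : u ⬝ᵥ ((1 - Γ) *ᵥ u) = 0 := by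
      have h0 := congrArg (dotProduct v) hv
      rw [dotProduct_zero] at h0
      rw [← Matrix.mulVec_mulVec, ← Matrix.mulVec_mulVec, dotProduct_mulVec,
        vecMul_transpose] at h0
      exact h0
    have hsub : u ⬝ᵥ u - u ⬝ᵥ (Γ *ᵥ u) = 0 := by
      rw [Matrix.sub_mulVec, Matrix.one_mulVec, dotProduct_sub] at hd
      exact hd
    have hle := dotProduct_gamma_le Γ u
    have hnn : (0 : ℝ) ≤ u ⬝ᵥ u := by
      simp only [dotProduct]
      exact Finset.sum_nonneg fun i _ => mul_self_nonneg _
    have huz : u ⬝ᵥ u = 0 := by nlinarith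
    have hu0 : u = 0 := dotProduct_self_eq_zero.mp huz
    exact hXinj v hu0
  have hBu : IsUnit (Xᵀ * (1 - Γ) * X) := by
    rw [← Matrix.mulVec_injective_iff_isUnit]
    intro v w h
    have : (Xᵀ * (1 - Γ) * X) *ᵥ (v - w) = 0 := by
      rw [Matrix.mulVec_sub, h, sub_self]
    have := hBker _ this
    exact sub_eq_zero.mp this
  -- determinants and inverse facts
  have hGd : IsUnit (Xᵀ * X).det := (Matrix.isUnit_iff_isUnit_det _).mp hGu
  have hBd : IsUnit (Xᵀ * (1 - Γ) * X).det := (Matrix.isUnit_iff_isUnit_det _).mp hBu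
  have hGi : (Xᵀ * X)⁻¹ * (Xᵀ * X) = 1 := Matrix.nonsing_inv_mul _ hGd
  have hGi' : (Xᵀ * X) * (Xᵀ * X)⁻¹ = 1 := Matrix.mul_nonsing_inv _ hGd
  have hBi : (Xᵀ * (1 - Γ) * X) * (Xᵀ * (1 - Γ) * X)⁻¹ = 1 := Matrix.mul_nonsing_inv _ hBd
  have hPX : P * X = X := by
    rw [hP, Matrix.mul_assoc, Matrix.mul_assoc, hGi, Matrix.mul_one]
  have h2 : P * PΓ = PΓ := by
    rw [hPΓ, ← Matrix.mul_assoc, ← Matrix.mul_assoc, ← Matrix.mul_assoc, hPX,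
      Matrix.mul_assoc]
  have hBcan : ∀ N : Matrix (Fin K) (Fin T) ℝ,
      Xᵀ * (1 - Γ) * X * ((Xᵀ * (1 - Γ) * X)⁻¹ * N) = N := by
    intro N
    rw [← Matrix.mul_assoc, hBi, Matrix.one_mul]
  have h1 : P * ((1 - Γ) * PΓ) = P * (1 - Γ) := by
    simp only [Matrix.mul_assoc] at hBcan
    rw [hP, hPΓ]
    simp only [Matrix.mul_assoc, hBcan]
  have key1 : (1 - P * Γ) * PΓ = P * (1 - Γ) := by
    have e : (1 - P * Γ) * PΓ = PΓ - (P * PΓ - P * ((1 - Γ) * PΓ)) := by noncomm_ring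
    rw [e, h2, h1, sub_sub_cancel]
  have key2 : (1 - P * Γ) * MΓ = M := by
    rw [hMΓ, hM]
    have e : (1 - P * Γ) * (1 - PΓ) = (1 - P * Γ) - (1 - P * Γ) * PΓ := by noncomm_ring
    rw [e, key1]
    noncomm_ring
  -- 1 - P*Γ is invertible
  have hUinj : ∀ v : Fin T → ℝ, (1 - P * Γ) *ᵥ v = 0 → v = 0 := by
    intro v hv
    have hveq : v = P *ᵥ (Γ *ᵥ v) := by
      rw [Matrix.sub_mulVec, Matrix.one_mulVec, sub_eq_zero] at hv
      rw [Matrix.mulVec_mulVec]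
      exact hv
    set w : Fin K → ℝ := (Xᵀ * X)⁻¹ *ᵥ (Xᵀ *ᵥ (Γ *ᵥ v)) with hw
    have hvXw : v = X *ᵥ w := by
      rw [hw, Matrix.mulVec_mulVec, Matrix.mulVec_mulVec, ← hP]
      exact hveq
    have hPv : P *ᵥ v = v := by
      conv_lhs => rw [hvXw]
      rw [Matrix.mulVec_mulVec, hPX, ← hvXw]
    have h5 : P *ᵥ ((1 - Γ) *ᵥ v) = 0 := by
      rw [Matrix.sub_mulVec, Matrix.one_mulVec, Matrix.mulVec_sub, hPv, ← hveq, sub_self]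
    rw [hP, ← Matrix.mulVec_mulVec, ← Matrix.mulVec_mulVec] at h5
    have h6 := hXinj _ h5
    have h7 : Xᵀ *ᵥ ((1 - Γ) *ᵥ v) = 0 := by
      have h : (Xᵀ * X) *ᵥ ((Xᵀ * X)⁻¹ *ᵥ (Xᵀ *ᵥ ((1 - Γ) *ᵥ v))) = (Xᵀ * X) *ᵥ 0 := by
        rw [h6]
      rwa [Matrix.mulVec_zero, Matrix.mulVec_mulVec, hGi', Matrix.one_mulVec] at h
    have h8 : (Xᵀ * (1 - Γ) * X) *ᵥ w = 0 := by
      rw [← Matrix.mulVec_mulVec, ← Matrix.mulVec_mulVec, ← hvXw]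
      exact h7
    rw [hvXw, hBker _ h8, Matrix.mulVec_zero]
  have hUu : IsUnit (1 - P * Γ) := by
    rw [← Matrix.mulVec_injective_iff_isUnit]
    intro a b h
    have : (1 - P * Γ) *ᵥ (a - b) = 0 := by rw [Matrix.mulVec_sub, h, sub_self]
    exact sub_eq_zero.mp (hUinj _ this)
  have hUd : IsUnit (1 - P * Γ).det := (Matrix.isUnit_iff_isUnit_det _).mp hUu
  have hUi : (1 - P * Γ)⁻¹ * (1 - P * Γ) = 1 := Matrix.nonsing_inv_mul _ hUd
  constructor
  · have h := congrArg (fun Z => (1 - P * Γ)⁻¹ * Z) key1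
    simp only [← Matrix.mul_assoc] at h
    rw [hUi, Matrix.one_mul] at h
    exact h
  · have h := congrArg (fun Z => (1 - P * Γ)⁻¹ * Z) key2
    simp only [← Matrix.mul_assoc] at h
    rw [hUi, Matrix.one_mul] at h
    exact h
end

section
/- Let X be a T×K real matrix of full column rank and Γ a T×T matrix with ‖Γ‖ < 1. Set M_Γ = I − X(Xᵀ(I−Γ)X)⁻¹Xᵀ(I−Γ). Then the matrix (I−Γ)M_Γ + M_Γᵀ(I−Γᵀ) is positive semi-definite. -/
open Matrix

section aux

variable {T K : ℕ}

/-- Accretivity: the quadratic form of `1 - Γ` dominates `(1-‖Γ‖)·‖v‖²`. -/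
lemma obl_acc {Γ : Matrix (Fin T) (Fin T) ℝ} (v : Fin T → ℝ) :
    (1 - ‖toEuclideanCLM (𝕜 := ℝ) Γ‖) * (v ⬝ᵥ v) ≤ v ⬝ᵥ ((1 - Γ) *ᵥ v) := by
  set A := toEuclideanCLM (𝕜 := ℝ) Γ with hA
  set u : EuclideanSpace ℝ (Fin T) := (WithLp.equiv 2 (Fin T → ℝ)).symm v with hu
  have h1 : inner ℝ u (A u) = v ⬝ᵥ (Γ *ᵥ v) := by
    simp [hA, hu, PiLp.inner_apply, dotProduct, toEuclideanCLM_toLp,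
      Matrix.toLin'_apply, mul_comm]
  have h2 : inner ℝ u u = v ⬝ᵥ v := by
    rw [real_inner_self_eq_norm_sq, EuclideanSpace.norm_sq_eq]
    simp [hu, PiLp.inner_apply, dotProduct, sq]
  have h3 : v ⬝ᵥ ((1 - Γ) *ᵥ v) = v ⬝ᵥ v - v ⬝ᵥ (Γ *ᵥ v) := by
    rw [Matrix.sub_mulVec, Matrix.one_mulVec, dotProduct_sub]
  have h4 : v ⬝ᵥ (Γ *ᵥ v) ≤ ‖A‖ * (v ⬝ᵥ v) := by
    rw [← h1]
    calc inner ℝ u (A u) ≤ ‖u‖ * ‖A u‖ := real_inner_le_norm u (A u)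
      _ ≤ ‖u‖ * (‖A‖ * ‖u‖) := by
          exact mul_le_mul_of_nonneg_left (A.le_opNorm u) (norm_nonneg u)
      _ = ‖A‖ * (‖u‖ * ‖u‖) := by ring
      _ = ‖A‖ * (v ⬝ᵥ v) := by rw [← real_inner_self_eq_norm_mul_norm, h2]
  rw [h3]; nlinarith [h4]

end aux

/-- With `M_Γ = I − X(Xᵀ(I−Γ)X)⁻¹Xᵀ(I−Γ)` for `X` of full column rank and `‖Γ‖ < 1`,
the matrix `(I−Γ)M_Γ + M_Γᵀ(I−Γᵀ)` is positive semi-definite. -/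
theorem oblique_residual_posSemidef {T K : ℕ}
    (X : Matrix (Fin T) (Fin K) ℝ) (Γ : Matrix (Fin T) (Fin T) ℝ)
    (hX : X.rank = K) (hΓ : ‖toEuclideanCLM (𝕜 := ℝ) Γ‖ < 1)
    (MΓ : Matrix (Fin T) (Fin T) ℝ)
    (hMΓ : MΓ = 1 - X * (Xᵀ * (1 - Γ) * X)⁻¹ * (Xᵀ * (1 - Γ))) :
    ((1 - Γ) * MΓ + MΓᵀ * (1 - Γᵀ)).PosSemidef := by
  have hΓ0 : (0:ℝ) < 1 - ‖toEuclideanCLM (𝕜 := ℝ) Γ‖ := by linarith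
  set B : Matrix (Fin T) (Fin T) ℝ := 1 - Γ with hB
  -- nonnegativity / strict positivity of the quadratic form of B = 1 - Γ
  have hacc0 : ∀ v : Fin T → ℝ, 0 ≤ v ⬝ᵥ (B *ᵥ v) := by
    intro v
    have h1 := obl_acc (Γ := Γ) v
    rw [← hB] at h1
    have hvv : 0 ≤ v ⬝ᵥ v := by
      simpa using dotProduct_self_star_nonneg (R := ℝ) v
    nlinarith
  have hacc : ∀ v : Fin T → ℝ, v ≠ 0 → 0 < v ⬝ᵥ (B *ᵥ v) := by
    intro v hv
    have h1 := obl_acc (Γ := Γ) v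
    rw [← hB] at h1
    have h2 : 0 < v ⬝ᵥ v := by
      have := Matrix.dotProduct_self_star_pos_iff (R := ℝ) (v := v) |>.mpr hv
      simpa using this
    nlinarith
  -- injectivity of X
  have hXinj : ∀ w : Fin K → ℝ, X *ᵥ w = 0 → w = 0 := by
    intro w hw
    have hker : LinearMap.ker X.mulVecLin = ⊥ := by
      have hrn := LinearMap.finrank_range_add_finrank_ker X.mulVecLin
      have hdom : Module.finrank ℝ (Fin K → ℝ) = K := by simp
      have hr : Module.finrank ℝ (LinearMap.range X.mulVecLin) = K := hX
      have : Module.finrank ℝ (LinearMap.ker X.mulVecLin) = 0 := by omega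
      exact Submodule.finrank_eq_zero.mp this
    have := LinearMap.ker_eq_bot.mp hker
    exact this (by simpa [Matrix.mulVecLin_apply] using hw)
  -- invertibility of S = XᵀBX
  have hS : IsUnit (Xᵀ * B * X) := by
    rw [← Matrix.mulVec_injective_iff_isUnit]
    intro a b hab
    have hsub : (Xᵀ * B * X) *ᵥ (a - b) = 0 := by
      rw [Matrix.mulVec_sub, hab, sub_self]
    have hq : (X *ᵥ (a - b)) ⬝ᵥ (B *ᵥ (X *ᵥ (a - b))) = 0 := by
      have h0 : (a - b) ⬝ᵥ ((Xᵀ * B * X) *ᵥ (a - b)) = 0 := by rw [hsub]; simp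
      rw [← h0]
      have he : (Xᵀ * B * X) *ᵥ (a - b) = Xᵀ *ᵥ (B *ᵥ (X *ᵥ (a - b))) := by
        rw [← Matrix.mulVec_mulVec, ← Matrix.mulVec_mulVec]
      rw [he, Matrix.dotProduct_mulVec (a - b), Matrix.vecMul_transpose]
    have hX0 : X *ᵥ (a - b) = 0 := by
      by_contra h
      exact absurd hq (ne_of_gt (hacc _ h))
    exact sub_eq_zero.mp (hXinj _ hX0)
  have hSdet : IsUnit (Xᵀ * B * X).det := (Matrix.isUnit_iff_isUnit_det _).mp hS
  -- key identity 1 : XᵀB MΓ = 0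
  have key1 : Xᵀ * (B * MΓ) = 0 := by
    rw [hMΓ]
    simp only [Matrix.mul_sub, Matrix.sub_mul, Matrix.mul_one, Matrix.one_mul,
      ← Matrix.mul_assoc]
    rw [Matrix.mul_nonsing_inv _ hSdet, Matrix.one_mul, sub_self]
  -- key identity 2 : MΓᵀ B MΓ = B MΓ
  have key2 : MΓᵀ * (B * MΓ) = B * MΓ := by
    have ht : MΓᵀ = 1 - Bᵀ * X * ((Xᵀ * B * X)⁻¹)ᵀ * Xᵀ := by
      rw [hMΓ]
      simp only [Matrix.transpose_sub, Matrix.transpose_one, Matrix.transpose_mul,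
        Matrix.transpose_transpose, ← Matrix.mul_assoc]
    rw [ht, Matrix.sub_mul, Matrix.one_mul,
      Matrix.mul_assoc (Bᵀ * X * ((Xᵀ * B * X)⁻¹)ᵀ) Xᵀ (B * MΓ),
      key1, Matrix.mul_zero, sub_zero]
  have hBt : (1 - Γᵀ) = Bᵀ := by
    rw [hB, Matrix.transpose_sub, Matrix.transpose_one]
  rw [hBt]
  rw [Matrix.posSemidef_iff_dotProduct_mulVec]
  constructor
  · -- Hermitian
    show _ = _
    simp only [Matrix.conjTranspose_add, Matrix.conjTranspose_mul]
    simp only [Matrix.conjTranspose_eq_transpose_of_trivial, Matrix.transpose_transpose]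
    exact add_comm _ _
  · -- quadratic form
    intro x
    have hstar : (star x : Fin T → ℝ) = x := by simp
    rw [hstar]
    have hdt : ∀ (C : Matrix (Fin T) (Fin T) ℝ) (v : Fin T → ℝ),
        x ⬝ᵥ (Cᵀ *ᵥ v) = (C *ᵥ x) ⬝ᵥ v := fun C v => by
      rw [Matrix.dotProduct_mulVec, Matrix.vecMul_transpose]
    have hmain : x ⬝ᵥ ((B * MΓ) *ᵥ x) = (MΓ *ᵥ x) ⬝ᵥ (B *ᵥ (MΓ *ᵥ x)) := by
      conv_lhs => rw [← key2]
      have he : (MΓᵀ * (B * MΓ)) *ᵥ x = MΓᵀ *ᵥ ((B * MΓ) *ᵥ x) := by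
        rw [Matrix.mulVec_mulVec]
      rw [he, hdt, ← Matrix.mulVec_mulVec]
    have hsecond : x ⬝ᵥ ((MΓᵀ * Bᵀ) *ᵥ x) = x ⬝ᵥ ((B * MΓ) *ᵥ x) := by
      have h1 : MΓᵀ * Bᵀ = (B * MΓ)ᵀ := by rw [Matrix.transpose_mul]
      rw [h1, hdt, dotProduct_comm]
    rw [Matrix.add_mulVec, dotProduct_add, hsecond, hmain]
    have := hacc0 (MΓ *ᵥ x)
    linarith
end

section
/- Let X be a T×K real matrix of full column rank and Γ a T×T matrix with ‖Γ‖ ≤ 1−c for some c ∈ (0,1). With M_Γ = I − X(Xᵀ(I−Γ)X)⁻¹Xᵀ(I−Γ) and T−K_Γ := tr[(I−Γ)M_Γ], one has the two-sided bound: ((1−‖Γ‖)/(1+‖Γ‖))·(T−K) ≤ tr[(I−Γ)M_Γ] ≤ ((1+‖Γ‖)/(1−‖Γ‖))·(T−K). -/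
open Matrix

section ObliqueAux

variable {T K : ℕ}

private lemma dot_self_nonneg' (v : Fin T → ℝ) : 0 ≤ v ⬝ᵥ v :=
  Finset.sum_nonneg fun i _ => mul_self_nonneg _

private lemma conj_diag_dot (Q N : Matrix (Fin T) (Fin T) ℝ) (j : Fin T) :
    (Qᵀ * N * Q) j j = (fun i => Q i j) ⬝ᵥ N.mulVec (fun i => Q i j) := by
  simp only [mul_apply, transpose_apply, dotProduct, mulVec, Finset.sum_mul, Finset.mul_sum]
  rw [Finset.sum_comm]
  exact Finset.sum_congr rfl fun a _ => Finset.sum_congr rfl fun b _ => by ring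

private lemma trace_transpose_mul_self_nonneg (B : Matrix (Fin T) (Fin T) ℝ) :
    0 ≤ (Bᵀ * B).trace := by
  rw [Matrix.trace]
  refine Finset.sum_nonneg fun j _ => ?_
  simp only [diag_apply, mul_apply, transpose_apply]
  exact Finset.sum_nonneg fun i _ => mul_self_nonneg _

private lemma dot_eq_inner' (v w : Fin T → ℝ) :
    v ⬝ᵥ w = (inner ℝ ((WithLp.equiv 2 (Fin T → ℝ)).symm v)
      ((WithLp.equiv 2 (Fin T → ℝ)).symm w) : ℝ) := by
  simp [PiLp.inner_apply, dotProduct, RCLike.inner_apply, mul_comm]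

private lemma mulVec_inj_of_rank (X : Matrix (Fin T) (Fin K) ℝ) (hX : X.rank = K) :
    Function.Injective X.mulVec := by
  have h2 := LinearMap.finrank_range_add_finrank_ker (X.mulVecLin)
  have hr : Module.finrank ℝ (LinearMap.range X.mulVecLin) = K := hX
  rw [hr, Module.finrank_fintype_fun_eq_card, Fintype.card_fin] at h2
  have hker : LinearMap.ker X.mulVecLin = ⊥ :=
    Submodule.finrank_eq_zero.mp (by omega)
  intro a b hab
  exact LinearMap.ker_eq_bot.mp hker (show X.mulVecLin a = X.mulVecLin b from hab)

private lemma dot_conj (X : Matrix (Fin T) (Fin K) ℝ) (N : Matrix (Fin T) (Fin T) ℝ)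
    (v : Fin K → ℝ) :
    v ⬝ᵥ (Xᵀ * N * X).mulVec v = (X.mulVec v) ⬝ᵥ N.mulVec (X.mulVec v) := by
  rw [← Matrix.mulVec_mulVec, ← Matrix.mulVec_mulVec, Matrix.dotProduct_mulVec,
    Matrix.vecMul_transpose]

/-- If `vᵀ N v ≥ ε vᵀv` with `ε > 0`, then `Xᵀ N X` is invertible for full-column-rank X. -/
private lemma isUnit_conj (X : Matrix (Fin T) (Fin K) ℝ) (hX : X.rank = K)
    (N : Matrix (Fin T) (Fin T) ℝ) (ε : ℝ) (hε : 0 < ε)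
    (hN : ∀ u : Fin T → ℝ, ε * (u ⬝ᵥ u) ≤ u ⬝ᵥ N.mulVec u) :
    IsUnit (Xᵀ * N * X) := by
  apply Matrix.mulVec_injective_iff_isUnit.mp
  have hXinj := mulVec_inj_of_rank X hX
  intro a b hab
  suffices h : ∀ v, (Xᵀ * N * X).mulVec v = 0 → v = 0 by
    have := h (a - b) (by rw [Matrix.mulVec_sub, hab, sub_self])
    exact sub_eq_zero.mp this
  intro v hv
  have h1 : v ⬝ᵥ (Xᵀ * N * X).mulVec v = 0 := by rw [hv, dotProduct_zero]
  rw [dot_conj] at h1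
  have h2 := hN (X.mulVec v)
  have h3 : 0 ≤ (X.mulVec v) ⬝ᵥ (X.mulVec v) := dot_self_nonneg' _
  have h4 : (X.mulVec v) ⬝ᵥ (X.mulVec v) = 0 := by nlinarith
  have h5 : X.mulVec v = 0 := dotProduct_self_eq_zero.mp h4
  have := hXinj (show X.mulVec v = X.mulVec 0 by rw [h5, Matrix.mulVec_zero])
  exact this

end ObliqueAux

set_option maxHeartbeats 2000000 in
/-- With `‖Γ‖ ≤ 1−c` for some `c ∈ (0,1)`, `K < T`, and
`M_Γ = I − X(Xᵀ(I−Γ)X)⁻¹Xᵀ(I−Γ)`, the trace `tr[(I−Γ)M_Γ]` satisfies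
`((1−‖Γ‖)/(1+‖Γ‖))(T−K) ≤ tr[(I−Γ)M_Γ] ≤ ((1+‖Γ‖)/(1−‖Γ‖))(T−K)`. -/
theorem trace_oblique_residual_bounds {T K : ℕ}
    (X : Matrix (Fin T) (Fin K) ℝ) (Γ : Matrix (Fin T) (Fin T) ℝ)
    (hX : X.rank = K) (hKT : K < T)
    (c : ℝ) (hc0 : 0 < c) (hc1 : c < 1)
    (hΓ : ‖toEuclideanCLM (𝕜 := ℝ) Γ‖ ≤ 1 - c)
    (MΓ : Matrix (Fin T) (Fin T) ℝ)
    (hMΓ : MΓ = 1 - X * (Xᵀ * (1 - Γ) * X)⁻¹ * (Xᵀ * (1 - Γ))) :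
    (1 - ‖toEuclideanCLM (𝕜 := ℝ) Γ‖) / (1 + ‖toEuclideanCLM (𝕜 := ℝ) Γ‖) * ((T : ℝ) - K)
        ≤ ((1 - Γ) * MΓ).trace ∧
      ((1 - Γ) * MΓ).trace
        ≤ (1 + ‖toEuclideanCLM (𝕜 := ℝ) Γ‖) / (1 - ‖toEuclideanCLM (𝕜 := ℝ) Γ‖) * ((T : ℝ) - K) := by
  set γ : ℝ := ‖toEuclideanCLM (𝕜 := ℝ) Γ‖ with hγdef
  have hγ0 : 0 ≤ γ := norm_nonneg _
  have hγ1 : γ < 1 := lt_of_le_of_lt hΓ (by linarith)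
  set G : Matrix (Fin T) (Fin T) ℝ := 1 - Γ with hGdef
  -- quadratic form bounds from the operator norm
  have hEe : ∀ v : Fin T → ℝ, (WithLp.equiv 2 (Fin T → ℝ)).symm (Γ.mulVec v)
      = toEuclideanCLM (𝕜 := ℝ) Γ ((WithLp.equiv 2 (Fin T → ℝ)).symm v) := by
    intro v
    simp [WithLp.equiv_symm_apply, Matrix.toEuclideanCLM_toLp, Matrix.toLin'_apply]
  have hdd0 : ∀ v : Fin T → ℝ, 0 ≤ v ⬝ᵥ v := fun v => dot_self_nonneg' v
  have hB1 : ∀ v : Fin T → ℝ, |v ⬝ᵥ Γ.mulVec v| ≤ γ * (v ⬝ᵥ v) := by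
    intro v
    rw [dot_eq_inner', hEe, dot_eq_inner' v v]
    calc |(inner ℝ ((WithLp.equiv 2 (Fin T → ℝ)).symm v)
          (toEuclideanCLM (𝕜 := ℝ) Γ ((WithLp.equiv 2 (Fin T → ℝ)).symm v)) : ℝ)|
        ≤ ‖(WithLp.equiv 2 (Fin T → ℝ)).symm v‖ *
            ‖toEuclideanCLM (𝕜 := ℝ) Γ ((WithLp.equiv 2 (Fin T → ℝ)).symm v)‖ :=
          abs_real_inner_le_norm _ _
      _ ≤ ‖(WithLp.equiv 2 (Fin T → ℝ)).symm v‖ *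
            (γ * ‖(WithLp.equiv 2 (Fin T → ℝ)).symm v‖) := by
          gcongr
          exact (toEuclideanCLM (𝕜 := ℝ) Γ).le_opNorm _
      _ = γ * (inner ℝ ((WithLp.equiv 2 (Fin T → ℝ)).symm v)
            ((WithLp.equiv 2 (Fin T → ℝ)).symm v) : ℝ) := by
          rw [real_inner_self_eq_norm_mul_norm]; ring
  have hB2 : ∀ v : Fin T → ℝ, (Γ.mulVec v) ⬝ᵥ (Γ.mulVec v) ≤ γ ^ 2 * (v ⬝ᵥ v) := by
    intro v
    rw [dot_eq_inner', hEe, dot_eq_inner' v v, real_inner_self_eq_norm_mul_norm,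
      real_inner_self_eq_norm_mul_norm]
    have h := (toEuclideanCLM (𝕜 := ℝ) Γ).le_opNorm ((WithLp.equiv 2 (Fin T → ℝ)).symm v)
    have h0 : (0:ℝ) ≤ ‖toEuclideanCLM (𝕜 := ℝ) Γ ((WithLp.equiv 2 (Fin T → ℝ)).symm v)‖ :=
      norm_nonneg _
    nlinarith [norm_nonneg ((WithLp.equiv 2 (Fin T → ℝ)).symm v)]
  have hCS : ∀ v w : Fin T → ℝ, (v ⬝ᵥ w) ^ 2 ≤ (v ⬝ᵥ v) * (w ⬝ᵥ w) := by
    intro v w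
    rw [dot_eq_inner' v w, dot_eq_inner' v v, dot_eq_inner' w w,
      real_inner_self_eq_norm_mul_norm, real_inner_self_eq_norm_mul_norm]
    have := abs_real_inner_le_norm ((WithLp.equiv 2 (Fin T → ℝ)).symm v)
      ((WithLp.equiv 2 (Fin T → ℝ)).symm w)
    nlinarith [abs_nonneg (inner ℝ ((WithLp.equiv 2 (Fin T → ℝ)).symm v)
      ((WithLp.equiv 2 (Fin T → ℝ)).symm w) : ℝ), le_abs_self (inner ℝ ((WithLp.equiv 2 (Fin T → ℝ)).symm v)
      ((WithLp.equiv 2 (Fin T → ℝ)).symm w) : ℝ), neg_abs_le (inner ℝ ((WithLp.equiv 2 (Fin T → ℝ)).symm v)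
      ((WithLp.equiv 2 (Fin T → ℝ)).symm w) : ℝ)]
  have hGmv : ∀ u : Fin T → ℝ, G.mulVec u = u - Γ.mulVec u := by
    intro u; rw [hGdef, Matrix.sub_mulVec, Matrix.one_mulVec]
  have hq_low : ∀ u : Fin T → ℝ, (1 - γ) * (u ⬝ᵥ u) ≤ u ⬝ᵥ G.mulVec u := by
    intro u
    rw [hGmv, dotProduct_sub]
    have := abs_le.mp (hB1 u)
    linarith [this.1, this.2]
  have hq_sq : ∀ u : Fin T → ℝ,
      (G.mulVec u) ⬝ᵥ (G.mulVec u) ≤ (1 + γ) * (u ⬝ᵥ G.mulVec u) := by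
    intro u
    rw [hGmv, dotProduct_sub, sub_dotProduct, sub_dotProduct,
      dotProduct_sub]
    have hcomm : (Γ.mulVec u) ⬝ᵥ u = u ⬝ᵥ (Γ.mulVec u) := dotProduct_comm _ _
    have h1 := abs_le.mp (hB1 u)
    have h2 := hB2 u
    have h0 := hdd0 u
    rw [hcomm]
    nlinarith [h1.1, h1.2]
  -- invertibility
  have hA : IsUnit (Xᵀ * G * X) := by
    refine isUnit_conj X hX G (1 - γ) (by linarith) hq_low
  have hXX : IsUnit (Xᵀ * X) := by
    have := isUnit_conj X hX 1 1 one_pos (fun u => by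
      rw [Matrix.one_mulVec]; linarith [hdd0 u])
    simpa using this
  -- inverse facts for A = XᵀGX
  set A := Xᵀ * G * X with hAdef
  have hAdet : IsUnit A.det := (Matrix.isUnit_iff_isUnit_det A).mp hA
  have hBA : A⁻¹ * A = 1 := Matrix.nonsing_inv_mul A hAdet
  have hAB : A * A⁻¹ = 1 := Matrix.mul_nonsing_inv A hAdet
  set P := X * A⁻¹ * (Xᵀ * G) with hPdef
  have hM : MΓ = 1 - P := hMΓ
  have h1 : (Xᵀ * G) * (X * A⁻¹) = 1 := by
    rw [← Matrix.mul_assoc, ← hAdef]; exact hAB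
  have hPP : P * P = P := by
    have e : (X * A⁻¹) * (((Xᵀ * G) * (X * A⁻¹)) * (Xᵀ * G)) = P * P := by
      simp only [hPdef, Matrix.mul_assoc]
    rw [← e, h1, Matrix.one_mul]
  have hPX : P * X = X := by
    have e : P * X = X * A⁻¹ * (Xᵀ * G * X) := by
      rw [hPdef]; simp only [Matrix.mul_assoc]
    rw [e, ← hAdef, Matrix.mul_assoc, hBA, Matrix.mul_one]
  have hMX : MΓ * X = 0 := by
    rw [hM, Matrix.sub_mul, Matrix.one_mul, hPX, sub_self]
  have hXGP : (Xᵀ * G) * P = Xᵀ * G := by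
    have e : (Xᵀ * G) * P = ((Xᵀ * G) * (X * A⁻¹)) * (Xᵀ * G) := by
      rw [hPdef]; simp only [Matrix.mul_assoc]
    rw [e, h1, Matrix.one_mul]
  have hXGM : (Xᵀ * G) * MΓ = 0 := by
    rw [hM, Matrix.mul_sub, Matrix.mul_one, hXGP, sub_self]
  have hMM : MΓ * MΓ = MΓ := by
    rw [hM, show (1 - P) * (1 - P) = 1 - P - P + P * P from by noncomm_ring, hPP]
    abel
  have hMGM : MΓᵀ * (G * MΓ) = G * MΓ := by
    have hPt : Pᵀ * (G * MΓ) = 0 := by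
      have e : Pᵀ * (G * MΓ) = Gᵀ * (X * ((A⁻¹)ᵀ * ((Xᵀ * G) * MΓ))) := by
        rw [hPdef]
        simp only [Matrix.transpose_mul, Matrix.transpose_transpose, Matrix.mul_assoc]
      rw [e, hXGM, Matrix.mul_zero, Matrix.mul_zero, Matrix.mul_zero]
    have e : MΓᵀ * (G * MΓ) = (1 - Pᵀ) * (G * MΓ) := by
      rw [hM, Matrix.transpose_sub, Matrix.transpose_one]
    rw [e, Matrix.sub_mul, Matrix.one_mul, hPt, sub_zero]
  -- traces
  have htrP : P.trace = (K : ℝ) := by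
    have e : P = X * (A⁻¹ * (Xᵀ * G)) := by rw [hPdef, Matrix.mul_assoc]
    rw [e, Matrix.trace_mul_comm, Matrix.mul_assoc, ← hAdef, hBA, Matrix.trace_one]
    simp
  have htrM : MΓ.trace = (T : ℝ) - K := by
    rw [hM, Matrix.trace_sub, Matrix.trace_one, htrP]
    simp
  have htrMtM : (T : ℝ) - K ≤ (MΓᵀ * MΓ).trace := by
    have h0 := trace_transpose_mul_self_nonneg (MΓ - MΓᵀ)
    have e : (MΓ - MΓᵀ)ᵀ * (MΓ - MΓᵀ)
        = MΓᵀ * MΓ - MΓᵀ * MΓᵀ - MΓ * MΓ + MΓ * MΓᵀ := by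
      rw [Matrix.transpose_sub, Matrix.transpose_transpose]
      noncomm_ring
    rw [e, Matrix.trace_add, Matrix.trace_sub, Matrix.trace_sub] at h0
    have e2 : (MΓ * MΓᵀ).trace = (MΓᵀ * MΓ).trace := Matrix.trace_mul_comm _ _
    have e3 : (MΓᵀ * MΓᵀ).trace = (MΓ * MΓ).trace := by
      rw [← Matrix.transpose_mul, Matrix.trace_transpose]
    have e4 : (MΓ * MΓ).trace = (T : ℝ) - K := by rw [hMM, htrM]
    linarith
  -- trace as sum of quadratic forms : lower bound
  have hsum1 : (G * MΓ).trace = ∑ j, (fun i => MΓ i j) ⬝ᵥ G.mulVec (fun i => MΓ i j) := by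
    conv_lhs => rw [← hMGM, ← Matrix.mul_assoc]
    rw [Matrix.trace]
    exact Finset.sum_congr rfl fun j _ => conj_diag_dot MΓ G j
  have hsum2 : (MΓᵀ * MΓ).trace = ∑ j, (fun i => MΓ i j) ⬝ᵥ (fun i => MΓ i j) := by
    rw [Matrix.trace]
    refine Finset.sum_congr rfl fun j _ => ?_
    have := conj_diag_dot MΓ 1 j
    rw [Matrix.mul_one, Matrix.one_mulVec] at this
    exact this
  have hlow : (1 - γ) * ((MΓᵀ * MΓ).trace) ≤ (G * MΓ).trace := by
    rw [hsum1, hsum2, Finset.mul_sum]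
    exact Finset.sum_le_sum fun j _ => hq_low _
  -- upper bound setup : orthogonal projector Q
  have hXXdet : IsUnit (Xᵀ * X).det := (Matrix.isUnit_iff_isUnit_det _).mp hXX
  have hXXi : (Xᵀ * X)⁻¹ * (Xᵀ * X) = 1 := Matrix.nonsing_inv_mul _ hXXdet
  have hXXi' : (Xᵀ * X) * (Xᵀ * X)⁻¹ = 1 := Matrix.mul_nonsing_inv _ hXXdet
  set Q : Matrix (Fin T) (Fin T) ℝ := 1 - X * (Xᵀ * X)⁻¹ * Xᵀ with hQdef
  have hQt : Qᵀ = Q := by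
    rw [hQdef, Matrix.transpose_sub, Matrix.transpose_one, Matrix.transpose_mul,
      Matrix.transpose_mul, Matrix.transpose_transpose, Matrix.transpose_nonsing_inv,
      Matrix.transpose_mul, Matrix.transpose_transpose, Matrix.mul_assoc]
  have hQQ : Q * Q = Q := by
    have h1' : Xᵀ * (X * (Xᵀ * X)⁻¹) = 1 := by
      rw [← Matrix.mul_assoc]; exact hXXi'
    have e : (X * (Xᵀ * X)⁻¹) * ((Xᵀ * (X * (Xᵀ * X)⁻¹)) * Xᵀ)
        = (X * (Xᵀ * X)⁻¹ * Xᵀ) * (X * (Xᵀ * X)⁻¹ * Xᵀ) := by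
      simp only [Matrix.mul_assoc]
    rw [hQdef, show (1 - X * (Xᵀ * X)⁻¹ * Xᵀ) * (1 - X * (Xᵀ * X)⁻¹ * Xᵀ)
        = 1 - X * (Xᵀ * X)⁻¹ * Xᵀ - X * (Xᵀ * X)⁻¹ * Xᵀ
          + (X * (Xᵀ * X)⁻¹ * Xᵀ) * (X * (Xᵀ * X)⁻¹ * Xᵀ) from by noncomm_ring,
      ← e, h1', Matrix.one_mul]
    have e2 : (X * (Xᵀ * X)⁻¹) * Xᵀ = X * (Xᵀ * X)⁻¹ * Xᵀ := rfl
    rw [e2]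
    abel
  have htrQ : Q.trace = (T : ℝ) - K := by
    have e : X * (Xᵀ * X)⁻¹ * Xᵀ = X * ((Xᵀ * X)⁻¹ * Xᵀ) := by rw [Matrix.mul_assoc]
    rw [hQdef, Matrix.trace_sub, Matrix.trace_one, e, Matrix.trace_mul_comm,
      Matrix.mul_assoc, hXXi, Matrix.trace_one]
    simp
  have hGMQ : (G * MΓ) * Q = G * MΓ := by
    have e : (G * MΓ) * (X * (Xᵀ * X)⁻¹ * Xᵀ) = G * ((MΓ * X) * ((Xᵀ * X)⁻¹ * Xᵀ)) := by
      simp only [Matrix.mul_assoc]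
    rw [hQdef, Matrix.mul_sub, Matrix.mul_one, e, hMX, Matrix.zero_mul, Matrix.mul_zero, sub_zero]
  have htrQGMQ : (G * MΓ).trace = (Qᵀ * (G * MΓ) * Q).trace := by
    rw [hQt]
    conv_rhs => rw [Matrix.trace_mul_cycle, hQQ, Matrix.trace_mul_comm, hGMQ]
  -- per-vector upper bound
  have hterm : ∀ v : Fin T → ℝ, v ⬝ᵥ (G * MΓ).mulVec v ≤ (1 + γ) * (v ⬝ᵥ v) := by
    intro v
    have hxu : (G * MΓ).mulVec v = G.mulVec (MΓ.mulVec v) := (Matrix.mulVec_mulVec _ _ _).symm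
    have hs : v ⬝ᵥ (G * MΓ).mulVec v = (MΓ.mulVec v) ⬝ᵥ G.mulVec (MΓ.mulVec v) := by
      conv_lhs => rw [← hMGM]
      rw [← Matrix.mulVec_mulVec, Matrix.dotProduct_mulVec, Matrix.vecMul_transpose, hxu]
    have hs0 : 0 ≤ v ⬝ᵥ (G * MΓ).mulVec v := by
      rw [hs]
      have h1' : 0 ≤ (1 - γ) * ((MΓ.mulVec v) ⬝ᵥ (MΓ.mulVec v)) :=
        mul_nonneg (by linarith) (hdd0 _)
      linarith [hq_low (MΓ.mulVec v)]
    have hxx : ((G * MΓ).mulVec v) ⬝ᵥ ((G * MΓ).mulVec v)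
        ≤ (1 + γ) * (v ⬝ᵥ (G * MΓ).mulVec v) := by
      rw [hs, hxu]
      exact hq_sq (MΓ.mulVec v)
    have hcs := hCS v ((G * MΓ).mulVec v)
    rcases eq_or_lt_of_le hs0 with h | h
    · rw [← h]
      exact mul_nonneg (by linarith) (hdd0 v)
    · have hvv := hdd0 v
      have key : (v ⬝ᵥ (G * MΓ).mulVec v) * (v ⬝ᵥ (G * MΓ).mulVec v)
          ≤ ((1 + γ) * (v ⬝ᵥ v)) * (v ⬝ᵥ (G * MΓ).mulVec v) := by
        have k1 : (v ⬝ᵥ v) * (((G * MΓ).mulVec v) ⬝ᵥ ((G * MΓ).mulVec v))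
            ≤ (v ⬝ᵥ v) * ((1 + γ) * (v ⬝ᵥ (G * MΓ).mulVec v)) :=
          mul_le_mul_of_nonneg_left hxx hvv
        have k0 : (v ⬝ᵥ (G * MΓ).mulVec v) ^ 2
            = (v ⬝ᵥ (G * MΓ).mulVec v) * (v ⬝ᵥ (G * MΓ).mulVec v) := sq _
        have k2 : (v ⬝ᵥ v) * ((1 + γ) * (v ⬝ᵥ (G * MΓ).mulVec v))
            = ((1 + γ) * (v ⬝ᵥ v)) * (v ⬝ᵥ (G * MΓ).mulVec v) := by ring
        linarith
      exact le_of_mul_le_mul_right key h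
  -- upper bound
  have hup : (G * MΓ).trace ≤ (1 + γ) * ((T : ℝ) - K) := by
    have hsum3 : (Qᵀ * (G * MΓ) * Q).trace
        = ∑ j, (fun i => Q i j) ⬝ᵥ (G * MΓ).mulVec (fun i => Q i j) := by
      rw [Matrix.trace]
      exact Finset.sum_congr rfl fun j _ => conj_diag_dot Q (G * MΓ) j
    have hsum4 : (Qᵀ * Q).trace = ∑ j, (fun i => Q i j) ⬝ᵥ (fun i => Q i j) := by
      rw [Matrix.trace]
      refine Finset.sum_congr rfl fun j _ => ?_
      have := conj_diag_dot Q 1 j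
      rw [Matrix.mul_one, Matrix.one_mulVec] at this
      exact this
    have htrQtQ : (Qᵀ * Q).trace = (T : ℝ) - K := by
      rw [hQt, hQQ, htrQ]
    calc (G * MΓ).trace = (Qᵀ * (G * MΓ) * Q).trace := htrQGMQ
      _ = ∑ j, (fun i => Q i j) ⬝ᵥ (G * MΓ).mulVec (fun i => Q i j) := hsum3
      _ ≤ ∑ j, (1 + γ) * ((fun i => Q i j) ⬝ᵥ (fun i => Q i j)) :=
          Finset.sum_le_sum fun j _ => hterm _
      _ = (1 + γ) * ((Qᵀ * Q).trace) := by rw [hsum4, Finset.mul_sum]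
      _ = (1 + γ) * ((T : ℝ) - K) := by rw [htrQtQ]
  -- final arithmetic
  have hTK : (0 : ℝ) ≤ (T : ℝ) - K := by
    have : (K : ℝ) ≤ (T : ℝ) := by exact_mod_cast hKT.le
    linarith
  constructor
  · have hlow2 : (1 - γ) * ((T : ℝ) - K) ≤ (G * MΓ).trace := by
      nlinarith
    have : (1 - γ) / (1 + γ) * ((T : ℝ) - K) ≤ (1 - γ) * ((T : ℝ) - K) := by
      have hd : (1 - γ) / (1 + γ) ≤ 1 - γ := by
        apply div_le_self (by linarith) (by linarith)
      exact mul_le_mul_of_nonneg_right hd hTK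
    linarith
  · have : (1 + γ) * ((T : ℝ) - K) ≤ (1 + γ) / (1 - γ) * ((T : ℝ) - K) := by
      have hd : (1 + γ) ≤ (1 + γ) / (1 - γ) := by
        rw [le_div_iff₀ (by linarith)]
        nlinarith
      exact mul_le_mul_of_nonneg_right hd hTK
    linarith
end

section
/- Let X and Z be T×K real matrices with ZᵀX invertible, partitioned as X = [X₁, X₂] and Z = [Z₁, Z₂] into blocks of K₁ and K₂ = K−K₁ columns. Assume Z₂ᵀX₂ and Z₁ᵀM₂X₁ are invertible, where M₂ = I − X₂(Z₂ᵀX₂)⁻¹Z₂ᵀ. Then for any r = (r₁ᵀ, 0ᵀ)ᵀ with r₁ ∈ ℝ^{K₁}, we have rᵀ(ZᵀX)⁻¹Zᵀ = r₁ᵀ(Z₁ᵀM₂X₁)⁻¹Z₁ᵀM₂. -/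
open Matrix

/-- Generalized Frisch–Waugh–Lovell for oblique (IV) projections: with `X = [X₁, X₂]`,
`Z = [Z₁, Z₂]`, `M₂ = I − X₂(Z₂ᵀX₂)⁻¹Z₂ᵀ`, and `r = (r₁ᵀ, 0ᵀ)ᵀ`,
`rᵀ(ZᵀX)⁻¹Zᵀ = r₁ᵀ(Z₁ᵀM₂X₁)⁻¹Z₁ᵀM₂`. -/
theorem generalized_frisch_waugh_lovell {T K₁ K₂ : ℕ}
    (X₁ Z₁ : Matrix (Fin T) (Fin K₁) ℝ) (X₂ Z₂ : Matrix (Fin T) (Fin K₂) ℝ)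
    (X Z : Matrix (Fin T) (Fin K₁ ⊕ Fin K₂) ℝ)
    (hXdef : X = fromCols X₁ X₂) (hZdef : Z = fromCols Z₁ Z₂)
    (M₂ : Matrix (Fin T) (Fin T) ℝ)
    (hM₂ : M₂ = 1 - X₂ * (Z₂ᵀ * X₂)⁻¹ * Z₂ᵀ)
    (hZX : IsUnit (Zᵀ * X)) (hZ₂X₂ : IsUnit (Z₂ᵀ * X₂))
    (hZ₁M₂X₁ : IsUnit (Z₁ᵀ * M₂ * X₁))
    (r₁ : Fin K₁ → ℝ) (r : Fin K₁ ⊕ Fin K₂ → ℝ)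
    (hr : r = Sum.elim r₁ 0) :
    r ᵥ* ((Zᵀ * X)⁻¹ * Zᵀ) = r₁ ᵥ* ((Z₁ᵀ * M₂ * X₁)⁻¹ * (Z₁ᵀ * M₂)) := by
  have hdZX : IsUnit (Zᵀ * X).det := (Matrix.isUnit_iff_isUnit_det _).mp hZX
  have hd22 : IsUnit (Z₂ᵀ * X₂).det := (Matrix.isUnit_iff_isUnit_det _).mp hZ₂X₂
  have hd1 : IsUnit (Z₁ᵀ * M₂ * X₁).det := (Matrix.isUnit_iff_isUnit_det _).mp hZ₁M₂X₁
  obtain ⟨a, ha⟩ : ∃ a : Fin K₁ → ℝ, a = r₁ ᵥ* (Z₁ᵀ * M₂ * X₁)⁻¹ := ⟨_, rfl⟩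
  obtain ⟨b, hb⟩ : ∃ b : Fin K₂ → ℝ, b = -(a ᵥ* (Z₁ᵀ * X₂ * (Z₂ᵀ * X₂)⁻¹)) := ⟨_, rfl⟩
  obtain ⟨u, hu⟩ : ∃ u : Fin K₁ ⊕ Fin K₂ → ℝ, u = Sum.elim a b := ⟨_, rfl⟩
  have hZXb : Zᵀ * X = fromBlocks (Z₁ᵀ * X₁) (Z₁ᵀ * X₂) (Z₂ᵀ * X₁) (Z₂ᵀ * X₂) := by
    rw [hXdef, hZdef, transpose_fromCols, fromRows_mul_fromCols]
  have hexp : Z₁ᵀ * M₂ * X₁ = Z₁ᵀ * X₁ - Z₁ᵀ * X₂ * (Z₂ᵀ * X₂)⁻¹ * (Z₂ᵀ * X₁) := by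
    rw [hM₂]
    simp only [Matrix.mul_sub, Matrix.sub_mul, Matrix.mul_one, Matrix.mul_assoc]
  have key : a ᵥ* (Z₁ᵀ * M₂ * X₁) = r₁ := by
    rw [ha, Matrix.vecMul_vecMul, Matrix.nonsing_inv_mul _ hd1, Matrix.vecMul_one]
  have e1 : a ᵥ* (Z₁ᵀ * X₁) + b ᵥ* (Z₂ᵀ * X₁) = r₁ := by
    rw [hb, Matrix.neg_vecMul, Matrix.vecMul_vecMul, ← sub_eq_add_neg,
      ← Matrix.vecMul_sub, ← hexp, key]
  have e2 : a ᵥ* (Z₁ᵀ * X₂) + b ᵥ* (Z₂ᵀ * X₂) = 0 := by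
    have h : Z₁ᵀ * X₂ * (Z₂ᵀ * X₂)⁻¹ * (Z₂ᵀ * X₂) = Z₁ᵀ * X₂ := by
      rw [Matrix.mul_assoc, Matrix.nonsing_inv_mul _ hd22, Matrix.mul_one]
    rw [hb, Matrix.neg_vecMul, Matrix.vecMul_vecMul, h]
    simp
  have h1 : u ᵥ* (Zᵀ * X) = r := by
    rw [hZXb, hu, vecMul_fromBlocks, hr]
    simp only [Sum.elim_comp_inl, Sum.elim_comp_inr]
    rw [e1, e2]
  have h2 : r ᵥ* (Zᵀ * X)⁻¹ = u := by
    have := congrArg (fun v => v ᵥ* (Zᵀ * X)⁻¹) h1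
    simpa [Matrix.vecMul_vecMul, Matrix.mul_nonsing_inv _ hdZX] using this.symm
  have h3 : u ᵥ* Zᵀ = a ᵥ* (Z₁ᵀ * M₂) := by
    have hZ1M2 : Z₁ᵀ * M₂ = Z₁ᵀ - Z₁ᵀ * X₂ * (Z₂ᵀ * X₂)⁻¹ * Z₂ᵀ := by
      rw [hM₂]
      simp only [Matrix.mul_sub, Matrix.mul_one, Matrix.mul_assoc]
    rw [hZdef, transpose_fromCols, hu, sumElim_vecMul_fromRows, hZ1M2,
      Matrix.vecMul_sub, hb, Matrix.neg_vecMul, Matrix.vecMul_vecMul, ← sub_eq_add_neg]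
  calc r ᵥ* ((Zᵀ * X)⁻¹ * Zᵀ) = (r ᵥ* (Zᵀ * X)⁻¹) ᵥ* Zᵀ := by
        rw [Matrix.vecMul_vecMul]
    _ = u ᵥ* Zᵀ := by rw [h2]
    _ = a ᵥ* (Z₁ᵀ * M₂) := h3
    _ = _ := by rw [ha, Matrix.vecMul_vecMul]
end

section
/- Let X and Z be T×K real matrices with ZᵀX invertible, partitioned as X = [X₁, X₂], Z = [Z₁, Z₂] with K₁ + K₂ = K. Assume Z₂ᵀX₂ and Z₁ᵀM₂X₁ are invertible where M₂ = I − X₂(Z₂ᵀX₂)⁻¹Z₂ᵀ. Then the oblique residual projection M_Z = I − X(ZᵀX)⁻¹Zᵀ satisfies M_Z = M₂ − M₂X₁(Z₁ᵀM₂X₁)⁻¹Z₁ᵀM₂. -/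
open Matrix

/-- With `X = [X₁, X₂]`, `Z = [Z₁, Z₂]`, `M₂ = I − X₂(Z₂ᵀX₂)⁻¹Z₂ᵀ`, the oblique
residual projection `M_Z = I − X(ZᵀX)⁻¹Zᵀ` satisfies
`M_Z = M₂ − M₂X₁(Z₁ᵀM₂X₁)⁻¹Z₁ᵀM₂`. -/
theorem oblique_residual_partialling_out {T K₁ K₂ : ℕ}
    (X₁ Z₁ : Matrix (Fin T) (Fin K₁) ℝ) (X₂ Z₂ : Matrix (Fin T) (Fin K₂) ℝ)
    (X Z : Matrix (Fin T) (Fin K₁ ⊕ Fin K₂) ℝ)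
    (hXdef : X = fromCols X₁ X₂) (hZdef : Z = fromCols Z₁ Z₂)
    (M₂ MZ : Matrix (Fin T) (Fin T) ℝ)
    (hM₂ : M₂ = 1 - X₂ * (Z₂ᵀ * X₂)⁻¹ * Z₂ᵀ)
    (hMZ : MZ = 1 - X * (Zᵀ * X)⁻¹ * Zᵀ)
    (hZX : IsUnit (Zᵀ * X)) (hZ₂X₂ : IsUnit (Z₂ᵀ * X₂))
    (hZ₁M₂X₁ : IsUnit (Z₁ᵀ * M₂ * X₁)) :
    MZ = M₂ - M₂ * X₁ * (Z₁ᵀ * M₂ * X₁)⁻¹ * (Z₁ᵀ * M₂) := by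
  set A := Z₁ᵀ * X₁ with hA
  set B := Z₁ᵀ * X₂ with hB
  set C := Z₂ᵀ * X₁ with hC
  set D := Z₂ᵀ * X₂ with hD
  set S := Z₁ᵀ * M₂ * X₁ with hS
  have hDD : D * D⁻¹ = 1 := mul_nonsing_inv _ ((isUnit_iff_isUnit_det _).mp hZ₂X₂)
  have hSS : S * S⁻¹ = 1 := mul_nonsing_inv _ ((isUnit_iff_isUnit_det _).mp hZ₁M₂X₁)
  have hSchur : S = A - B * D⁻¹ * C := by
    rw [hS, hM₂, hA, hB, hC]
    simp only [Matrix.mul_sub, Matrix.sub_mul, Matrix.mul_one, Matrix.one_mul, Matrix.mul_assoc]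
  have hSS2 : (A - B * D⁻¹ * C) * S⁻¹ = 1 := by rw [← hSchur]; exact hSS
  have hZX_blocks : Zᵀ * X = fromBlocks A B C D := by
    rw [hZdef, hXdef, transpose_fromCols, fromRows_mul_fromCols]
  set Si := S⁻¹ with hSi
  set Di := D⁻¹ with hDi
  set W : Matrix (Fin K₁ ⊕ Fin K₂) (Fin K₁ ⊕ Fin K₂) ℝ :=
    fromBlocks Si (-(Si * (B * Di))) (-(Di * (C * Si))) (Di + Di * (C * (Si * (B * Di)))) with hW
  have e11 : A * Si + B * -(Di * (C * Si)) = 1 := by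
    have h1 : A * Si + B * -(Di * (C * Si)) = (A - B * Di * C) * Si := by
      simp only [Matrix.mul_neg, Matrix.sub_mul, Matrix.add_mul, Matrix.neg_mul,
        Matrix.mul_assoc, sub_eq_add_neg]
    rw [h1, hSS2]
  have e12 : A * -(Si * (B * Di)) + B * (Di + Di * (C * (Si * (B * Di)))) = 0 := by
    have key : A * (Si * (B * Di)) - B * (Di * (C * (Si * (B * Di)))) = B * Di := by
      have h2 : A * (Si * (B * Di)) - B * (Di * (C * (Si * (B * Di))))
          = (A - B * Di * C) * Si * (B * Di) := by
        simp only [Matrix.sub_mul, Matrix.mul_assoc]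
      rw [h2, hSS2, Matrix.one_mul]
    have key' : A * (Si * (B * Di)) = B * Di + B * (Di * (C * (Si * (B * Di)))) :=
      sub_eq_iff_eq_add.mp key
    rw [Matrix.mul_neg, key', Matrix.mul_add]
    abel
  have e21 : C * Si + D * -(Di * (C * Si)) = 0 := by
    rw [Matrix.mul_neg, ← Matrix.mul_assoc, hDD, Matrix.one_mul]
    abel
  have e22 : C * -(Si * (B * Di)) + D * (Di + Di * (C * (Si * (B * Di)))) = 1 := by
    rw [Matrix.mul_add, ← Matrix.mul_assoc D Di, hDD, Matrix.one_mul, Matrix.mul_neg]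
    abel
  have hright : (Zᵀ * X) * W = 1 := by
    rw [hZX_blocks, hW, fromBlocks_multiply, e11, e12, e21, e22, fromBlocks_one]
  have hinv : (Zᵀ * X)⁻¹ = W := inv_eq_right_inv hright
  rw [hMZ, hinv, hXdef, hZdef, transpose_fromCols, hW, fromCols_mul_fromBlocks,
    fromCols_mul_fromRows, hM₂, hB, hC]
  clear_value Si Di
  clear hSi hDi hSS hSS2 hSchur e11 e12 e21 e22 hright hinv hDD
  simp only [Matrix.mul_sub, Matrix.sub_mul, Matrix.mul_add, Matrix.add_mul, Matrix.mul_neg,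
    Matrix.neg_mul, Matrix.mul_one, Matrix.one_mul, Matrix.mul_assoc, sub_eq_add_neg, neg_add,
    neg_neg]
  abel
end

section
/- Let X ∈ ℝ^{T×K} have rank K, Γ ∈ ℝ^{T×T} with ‖Γ‖ < 1, and P_Γ = X(Xᵀ(I−Γ)X)⁻¹Xᵀ(I−Γ). Then for any T×T matrix A, |tr(A P_Γ)| ≤ K·‖A‖·(1+‖Γ‖)/(1−‖Γ‖). -/
open Matrix

/-- Euclidean (ℓ²) norm of a plain vector. -/
noncomputable def eN {n : ℕ} (v : Fin n → ℝ) : ℝ :=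
  ‖(WithLp.equiv 2 (Fin n → ℝ)).symm v‖

lemma eN_nonneg {n : ℕ} (v : Fin n → ℝ) : 0 ≤ eN v := norm_nonneg _

lemma eN_sq {n : ℕ} (v : Fin n → ℝ) : eN v ^ 2 = v ⬝ᵥ v := by
  rw [eN, ← real_inner_self_eq_norm_sq]
  simp [EuclideanSpace.real_norm_sq_eq, dotProduct, ← sq]

lemma eN_dot_le {n : ℕ} (v w : Fin n → ℝ) : |v ⬝ᵥ w| ≤ eN v * eN w := by
  have h := abs_real_inner_le_norm ((WithLp.equiv 2 (Fin n → ℝ)).symm v)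
    ((WithLp.equiv 2 (Fin n → ℝ)).symm w)
  have h2 : (inner ℝ ((WithLp.equiv 2 (Fin n → ℝ)).symm v)
      ((WithLp.equiv 2 (Fin n → ℝ)).symm w) : ℝ) = v ⬝ᵥ w := by
    simp [PiLp.inner_apply, dotProduct, RCLike.inner_apply, mul_comm]
  rwa [h2] at h

lemma eN_sub_le {n : ℕ} (v w : Fin n → ℝ) : eN (v - w) ≤ eN v + eN w := by
  rw [eN, WithLp.equiv_symm_apply, WithLp.toLp_sub]
  exact norm_sub_le _ _

lemma eN_eq_zero {n : ℕ} {v : Fin n → ℝ} : eN v = 0 ↔ v = 0 := by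
  rw [eN, norm_eq_zero, Equiv.symm_apply_eq]
  simp

lemma eN_mulVec_le {n : ℕ} (M : Matrix (Fin n) (Fin n) ℝ) (v : Fin n → ℝ) :
    eN (M *ᵥ v) ≤ ‖toEuclideanCLM (𝕜 := ℝ) M‖ * eN v := by
  have h := (toEuclideanCLM (𝕜 := ℝ) M).le_opNorm ((WithLp.equiv 2 (Fin n → ℝ)).symm v)
  rwa [WithLp.equiv_symm_apply, toEuclideanCLM_toLp] at h

lemma abs_apply_le_eN {n : ℕ} (v : Fin n → ℝ) (i : Fin n) : |v i| ≤ eN v := by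
  have h1 : |v i| ^ 2 ≤ eN v ^ 2 := by
    rw [eN_sq, sq_abs]
    simpa [dotProduct, sq] using Finset.single_le_sum
      (f := fun j => v j * v j) (fun j _ => mul_self_nonneg _) (Finset.mem_univ i)
  exact (pow_le_pow_iff_left₀ (abs_nonneg _) (eN_nonneg _) two_ne_zero).mp h1

lemma eq_of_sq_eq_sq' {a b : ℝ} (ha : 0 ≤ a) (hb : 0 ≤ b) (h : a ^ 2 = b ^ 2) : a = b := by
  nlinarith

open scoped MatrixOrder in
lemma exists_sqrt_aux {K : ℕ} (M : Matrix (Fin K) (Fin K) ℝ) (h : M.PosSemidef) :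
    ∃ S : Matrix (Fin K) (Fin K) ℝ, S * S = M ∧ Sᵀ = S := by
  refine ⟨CFC.sqrt M, CFC.sqrt_mul_sqrt_self M h.nonneg, ?_⟩
  have := (CFC.sqrt_nonneg M).posSemidef.1
  rwa [IsHermitian, conjTranspose_eq_transpose_of_trivial] at this

/-- For the oblique projection `P_Γ = X(Xᵀ(I−Γ)X)⁻¹Xᵀ(I−Γ)` with `X` of rank `K`
and `‖Γ‖ < 1`, one has `|tr(A P_Γ)| ≤ K·‖A‖·(1+‖Γ‖)/(1−‖Γ‖)` for any `A`. -/
theorem abs_trace_mul_oblique_proj_le {T K : ℕ}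
    (X : Matrix (Fin T) (Fin K) ℝ) (Γ : Matrix (Fin T) (Fin T) ℝ)
    (hX : X.rank = K) (hΓ : ‖toEuclideanCLM (𝕜 := ℝ) Γ‖ < 1)
    (PΓ : Matrix (Fin T) (Fin T) ℝ)
    (hPΓ : PΓ = X * (Xᵀ * (1 - Γ) * X)⁻¹ * (Xᵀ * (1 - Γ)))
    (A : Matrix (Fin T) (Fin T) ℝ) :
    |(A * PΓ).trace| ≤
      (K : ℝ) * ‖toEuclideanCLM (𝕜 := ℝ) A‖ *
        ((1 + ‖toEuclideanCLM (𝕜 := ℝ) Γ‖) / (1 - ‖toEuclideanCLM (𝕜 := ℝ) Γ‖)) := by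
  set γ : ℝ := ‖toEuclideanCLM (𝕜 := ℝ) Γ‖ with hγdef
  have hγ0 : 0 ≤ γ := norm_nonneg _
  have hγ1 : 0 < 1 - γ := by linarith
  -- X has injective mulVec
  have hXinj : ∀ v : Fin K → ℝ, X *ᵥ v = 0 → v = 0 := by
    intro v hv
    have hrn := LinearMap.finrank_range_add_finrank_ker X.mulVecLin
    rw [show Module.finrank ℝ (LinearMap.range X.mulVecLin) = X.rank from rfl, hX,
      Module.finrank_pi] at hrn
    have hker : LinearMap.ker X.mulVecLin = ⊥ := by
      apply Submodule.finrank_eq_zero.mp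
      simp only [Fintype.card_fin] at hrn
      omega
    have : v ∈ LinearMap.ker X.mulVecLin := by simpa [Matrix.mulVecLin_apply] using hv
    simpa [hker] using this
  -- Gram matrix is positive definite
  have hG : (Xᵀ * X).PosDef := by
    refine PosDef.of_dotProduct_mulVec_pos ?_ ?_
    · simpa [conjTranspose_eq_transpose_of_trivial] using isHermitian_conjTranspose_mul_self X
    · intro x hx
      have hd : star x ⬝ᵥ (Xᵀ * X) *ᵥ x = (X *ᵥ x) ⬝ᵥ (X *ᵥ x) := by
        rw [star_trivial, ← mulVec_mulVec, dotProduct_mulVec, vecMul_transpose]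
      have hne : X *ᵥ x ≠ 0 := fun h => hx (hXinj x h)
      have hpos : 0 < eN (X *ᵥ x) ^ 2 :=
        pow_pos ((eN_nonneg _).lt_of_ne (fun h => hne (eN_eq_zero.mp h.symm))) 2
      rw [hd, ← eN_sq]; exact hpos
  obtain ⟨S, hSS, hSH⟩ := exists_sqrt_aux (Xᵀ * X) hG.posSemidef
  have hSdetu : IsUnit S.det := by
    have hdet : S.det * S.det = (Xᵀ * X).det := by rw [← det_mul, hSS]
    have hpos := hG.det_pos
    refine isUnit_iff_ne_zero.mpr (fun h => ?_)
    rw [h, mul_zero] at hdet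
    rw [← hdet] at hpos
    exact lt_irrefl 0 hpos
  set Q : Matrix (Fin T) (Fin K) ℝ := X * S⁻¹ with hQdef
  have hQS : Q * S = X := by
    rw [hQdef, Matrix.mul_assoc, Matrix.nonsing_inv_mul _ hSdetu, Matrix.mul_one]
  have hQt : Qᵀ = S⁻¹ * Xᵀ := by
    rw [hQdef, transpose_mul, transpose_nonsing_inv, hSH]
  have hQtQ : Qᵀ * Q = 1 := by
    rw [hQt, hQdef, Matrix.mul_assoc, ← Matrix.mul_assoc Xᵀ X S⁻¹, ← hSS,
      Matrix.mul_assoc S S S⁻¹, Matrix.mul_nonsing_inv _ hSdetu, Matrix.mul_one,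
      Matrix.nonsing_inv_mul _ hSdetu]
  -- Q preserves norms
  have hQnorm : ∀ y : Fin K → ℝ, eN (Q *ᵥ y) = eN y := by
    intro y
    apply eq_of_sq_eq_sq' (eN_nonneg _) (eN_nonneg _)
    rw [eN_sq, eN_sq, dotProduct_mulVec, vecMul_mulVec, hQtQ, vecMul_one]
  -- Qᵀ is a contraction
  have hQtnorm : ∀ v : Fin T → ℝ, eN (Qᵀ *ᵥ v) ≤ eN v := by
    intro v
    have h2 : eN (Qᵀ *ᵥ v) ^ 2 ≤ eN (Qᵀ *ᵥ v) * eN v := by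
      calc eN (Qᵀ *ᵥ v) ^ 2 = (Q *ᵥ (Qᵀ *ᵥ v)) ⬝ᵥ v := by
            rw [eN_sq, dotProduct_mulVec, vecMul_transpose]
        _ ≤ |(Q *ᵥ (Qᵀ *ᵥ v)) ⬝ᵥ v| := le_abs_self _
        _ ≤ eN (Q *ᵥ (Qᵀ *ᵥ v)) * eN v := eN_dot_le _ _
        _ = eN (Qᵀ *ᵥ v) * eN v := by rw [hQnorm]
    rcases (eN_nonneg (Qᵀ *ᵥ v)).eq_or_lt with h | h
    · rw [← h]; exact eN_nonneg v
    · nlinarith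
  -- coercivity of (1 - Γ)
  have hcoerc : ∀ v : Fin T → ℝ, (1 - γ) * eN v ^ 2 ≤ v ⬝ᵥ ((1 - Γ) *ᵥ v) := by
    intro v
    have hΓv : v ⬝ᵥ (Γ *ᵥ v) ≤ γ * eN v ^ 2 := by
      calc v ⬝ᵥ (Γ *ᵥ v) ≤ |v ⬝ᵥ (Γ *ᵥ v)| := le_abs_self _
        _ ≤ eN v * eN (Γ *ᵥ v) := eN_dot_le _ _
        _ ≤ eN v * (γ * eN v) := by
            exact mul_le_mul_of_nonneg_left (eN_mulVec_le Γ v) (eN_nonneg v)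
        _ = γ * eN v ^ 2 := by ring
    have hexp : (1 - Γ) *ᵥ v = v - Γ *ᵥ v := by rw [sub_mulVec, one_mulVec]
    rw [hexp, dotProduct_sub, ← eN_sq]
    linarith
  -- upper bound for (1 - Γ)
  have hIΓ : ∀ v : Fin T → ℝ, eN ((1 - Γ) *ᵥ v) ≤ (1 + γ) * eN v := by
    intro v
    have hexp : (1 - Γ) *ᵥ v = v - Γ *ᵥ v := by rw [sub_mulVec, one_mulVec]
    calc eN ((1 - Γ) *ᵥ v) = eN (v - Γ *ᵥ v) := by rw [hexp]
      _ ≤ eN v + eN (Γ *ᵥ v) := eN_sub_le _ _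
      _ ≤ eN v + γ * eN v := by linarith [eN_mulVec_le Γ v]
      _ = (1 + γ) * eN v := by ring
  set N : Matrix (Fin K) (Fin K) ℝ := Qᵀ * (1 - Γ) * Q with hNdef
  have hNlower : ∀ y : Fin K → ℝ, (1 - γ) * eN y ≤ eN (N *ᵥ y) := by
    intro y
    have h1 : (1 - γ) * eN y ^ 2 ≤ y ⬝ᵥ (N *ᵥ y) := by
      have hexp : N *ᵥ y = Qᵀ *ᵥ ((1 - Γ) *ᵥ (Q *ᵥ y)) := by
        rw [hNdef, ← mulVec_mulVec, ← mulVec_mulVec]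
      rw [hexp, dotProduct_mulVec, vecMul_transpose]
      calc (1 - γ) * eN y ^ 2 = (1 - γ) * eN (Q *ᵥ y) ^ 2 := by rw [hQnorm]
        _ ≤ (Q *ᵥ y) ⬝ᵥ ((1 - Γ) *ᵥ (Q *ᵥ y)) := hcoerc _
    have h2 : y ⬝ᵥ (N *ᵥ y) ≤ eN y * eN (N *ᵥ y) :=
      le_trans (le_abs_self _) (eN_dot_le _ _)
    rcases (eN_nonneg y).eq_or_lt with h | h
    · rw [← h, mul_zero]; exact eN_nonneg _
    · nlinarith
  have hNdetu : IsUnit N.det := by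
    rw [← isUnit_iff_isUnit_det]
    rw [← Matrix.mulVec_injective_iff_isUnit]
    intro a b hab
    have hz : N *ᵥ (a - b) = 0 := by rw [mulVec_sub, hab, sub_self]
    have h1 := hNlower (a - b)
    rw [hz] at h1
    have h0 : eN (0 : Fin K → ℝ) = 0 := eN_eq_zero.mpr rfl
    rw [h0] at h1
    have : eN (a - b) = 0 := le_antisymm (by nlinarith [eN_nonneg (a - b)]) (eN_nonneg _)
    have := eN_eq_zero.mp this
    exact sub_eq_zero.mp this
  have hNinv : ∀ v : Fin K → ℝ, eN (N⁻¹ *ᵥ v) ≤ eN v / (1 - γ) := by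
    intro v
    have hNN : N *ᵥ (N⁻¹ *ᵥ v) = v := by
      rw [mulVec_mulVec, Matrix.mul_nonsing_inv _ hNdetu, one_mulVec]
    have h1 := hNlower (N⁻¹ *ᵥ v)
    rw [hNN] at h1
    rw [le_div_iff₀ hγ1]
    linarith
  -- the projection identity
  have hBinv : (Xᵀ * (1 - Γ) * X)⁻¹ = S⁻¹ * (N⁻¹ * S⁻¹) := by
    have hB : Xᵀ * (1 - Γ) * X = S * (N * S) := by
      rw [← hQS, transpose_mul, hSH, hNdef]
      simp only [Matrix.mul_assoc]
    rw [hB, Matrix.mul_inv_rev, Matrix.mul_inv_rev, Matrix.mul_assoc]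
  have hPQ : PΓ = Q * (N⁻¹ * (Qᵀ * (1 - Γ))) := by
    have hXt : Xᵀ = S * Qᵀ := by rw [← hQS, transpose_mul, hSH]
    rw [hPΓ, hBinv, hXt, ← hQS]
    simp only [Matrix.mul_assoc]
    rw [Matrix.mul_nonsing_inv_cancel_left _ _ hSdetu,
      Matrix.nonsing_inv_mul_cancel_left _ _ hSdetu]
  set C : Matrix (Fin K) (Fin K) ℝ := (Qᵀ * (1 - Γ)) * (A * (Q * N⁻¹)) with hCdef
  have htr : (A * PΓ).trace = C.trace := by
    have hAP : A * PΓ = (A * (Q * N⁻¹)) * (Qᵀ * (1 - Γ)) := by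
      rw [hPQ]; simp only [Matrix.mul_assoc]
    rw [hAP, Matrix.trace_mul_comm, hCdef]
  set α : ℝ := ‖toEuclideanCLM (𝕜 := ℝ) A‖ with hαdef
  have hα : 0 ≤ α := norm_nonneg _
  have hδ : ∀ i : Fin K, eN (Pi.single i 1 : Fin K → ℝ) = 1 := by
    intro i
    apply eq_of_sq_eq_sq' (eN_nonneg _) zero_le_one
    rw [eN_sq, one_pow]
    simp [dotProduct, Pi.single_apply]
  have hdiag : ∀ i : Fin K, |C i i| ≤ α * ((1 + γ) / (1 - γ)) := by
    intro i
    have hci : C i i = (C *ᵥ Pi.single i 1) i := by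
      simp [mulVec, dotProduct, Pi.single_apply]
    have hCcol : C *ᵥ Pi.single i 1 =
        Qᵀ *ᵥ ((1 - Γ) *ᵥ (A *ᵥ (Q *ᵥ (N⁻¹ *ᵥ Pi.single i 1)))) := by
      rw [hCdef]; simp only [← mulVec_mulVec]
    calc |C i i| = |(C *ᵥ Pi.single i 1) i| := by rw [← hci]
      _ ≤ eN (C *ᵥ Pi.single i 1) := abs_apply_le_eN _ i
      _ = eN (Qᵀ *ᵥ ((1 - Γ) *ᵥ (A *ᵥ (Q *ᵥ (N⁻¹ *ᵥ Pi.single i 1))))) := by rw [hCcol]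
      _ ≤ eN ((1 - Γ) *ᵥ (A *ᵥ (Q *ᵥ (N⁻¹ *ᵥ Pi.single i 1)))) := hQtnorm _
      _ ≤ (1 + γ) * eN (A *ᵥ (Q *ᵥ (N⁻¹ *ᵥ Pi.single i 1))) := hIΓ _
      _ ≤ (1 + γ) * (α * eN (Q *ᵥ (N⁻¹ *ᵥ Pi.single i 1))) :=
          mul_le_mul_of_nonneg_left (eN_mulVec_le A _) (by linarith)
      _ = (1 + γ) * (α * eN (N⁻¹ *ᵥ Pi.single i 1)) := by rw [hQnorm]
      _ ≤ (1 + γ) * (α * (eN (Pi.single i 1 : Fin K → ℝ) / (1 - γ))) :=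
          mul_le_mul_of_nonneg_left
            (mul_le_mul_of_nonneg_left (hNinv _) hα) (by linarith)
      _ = α * ((1 + γ) / (1 - γ)) := by rw [hδ i]; field_simp
  rw [htr]
  calc |C.trace| = |∑ i, C i i| := by rw [Matrix.trace]; rfl
    _ ≤ ∑ i, |C i i| := Finset.abs_sum_le_sum_abs _ _
    _ ≤ ∑ _i : Fin K, α * ((1 + γ) / (1 - γ)) := Finset.sum_le_sum (fun i _ => hdiag i)
    _ = (K : ℝ) * α * ((1 + γ) / (1 - γ)) := by
        rw [Finset.sum_const, Finset.card_univ, Fintype.card_fin, nsmul_eq_mul, mul_assoc]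
end
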